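/- arXiv:2111.09679 — 2 statements merged into one kernel-verified Lean document; each statement's English description precedes it below -/
import Mathlib

section
/- Let π be a probability measure on a measurable data space Z, let n ≥ 1, and let ℓ : Θ × Z → ℝ be nonnegative and measurable. For a finite tuple D = (z_1,…,z_m) ∈ Z^m, write S_D(θ) := Σ_{i=1}^m ℓ(θ,z_i) and assume the Gibbs posterior density p_D(θ) := exp(−S_D(θ)/T)/∫ exp(−S_D(θ')/T) dμ(θ') is well defined (finite positive normalizer) for π-almost-every tuple of each relevant length. Consider the random experiment H₁: sample D = (z_1,…,z_n) i.i.d. from π, sample θ with conditional density p_D with respect to μ, sample an index J uniformly from {1,…,n} independently of θ given D, and output (θ, z_J). Then for every bounded measurable g : Θ × Z → ℝ, 𝔼_{H₁}[g(θ, z_J)] = ∫_Z ∫_Θ g(θ,z) · 𝔼_{D'∼π^{n−1}}[p_{D'∪z}(θ)] dμ(θ) dπ(z); that is, the joint law of (θ, z_J) under H₁ has density (with respect to μ ⊗ π) equal to (θ,z) ↦ 𝔼_{D'∼π^{n−1}}[p_{D'∪z}(θ)], where D'∪z denotes the tuple D' of length n−1 with z appended. -/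
open MeasureTheory

/-- The Gibbs posterior density (w.r.t. `μ`) of the model trained on the finite
dataset `D : Fin m → Z` with per-record loss `ℓ` and temperature `T`:
`p_D(θ) = exp(−(Σ_i ℓ(θ, D i))/T) / ∫ exp(−(Σ_i ℓ(θ', D i))/T) dμ(θ')`. -/
noncomputable def gibbsDensity {Θ Z : Type*} [MeasurableSpace Θ]
    (μ : MeasureTheory.Measure Θ) (T : ℝ) (ℓ : Θ → Z → ℝ)
    {m : ℕ} (D : Fin m → Z) (θ : Θ) : ℝ :=
  Real.exp (-(∑ i, ℓ θ (D i)) / T) /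
    ∫ θ', Real.exp (-(∑ i, ℓ θ' (D i)) / T) ∂μ

section GibbsAux

variable {Θ Z : Type*} [MeasurableSpace Θ] [MeasurableSpace Z]
  (μ : Measure Θ) (T : ℝ) (ℓ : Θ → Z → ℝ)

lemma gibbsAux_nonneg {m : ℕ} (D : Fin m → Z) (θ : Θ) : 0 ≤ gibbsDensity μ T ℓ D θ :=
  div_nonneg (Real.exp_pos _).le (integral_nonneg fun _ => (Real.exp_pos _).le)

lemma gibbsAux_sum_insertNth {m : ℕ} (f : Z → ℝ) (j : Fin (m + 1)) (z : Z) (D' : Fin m → Z) :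
    ∑ i, f ((Fin.insertNth j z D' : Fin (m + 1) → Z) i) = f z + ∑ i, f (D' i) := by
  rw [Fin.sum_univ_succAbove (fun i => f ((Fin.insertNth j z D' : Fin (m + 1) → Z) i)) j]
  simp

lemma gibbsAux_sum_snoc {m : ℕ} (f : Z → ℝ) (z : Z) (D' : Fin m → Z) :
    ∑ i, f ((Fin.snoc D' z : Fin (m + 1) → Z) i) = f z + ∑ i, f (D' i) := by
  rw [Fin.sum_univ_castSucc (fun i => f ((Fin.snoc D' z : Fin (m + 1) → Z) i))]
  simp [add_comm]

lemma gibbsAux_insertNth {m : ℕ} (j : Fin (m + 1)) (z : Z) (D' : Fin m → Z) (θ : Θ) :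
    gibbsDensity μ T ℓ (Fin.insertNth j z D') θ = gibbsDensity μ T ℓ (Fin.snoc D' z) θ := by
  have h1 : ∀ θ' : Θ, ∑ i, ℓ θ' ((Fin.insertNth j z D' : Fin (m + 1) → Z) i)
      = ℓ θ' z + ∑ i, ℓ θ' (D' i) :=
    fun θ' => gibbsAux_sum_insertNth (ℓ θ') j z D'
  have h2 : ∀ θ' : Θ, ∑ i, ℓ θ' ((Fin.snoc D' z : Fin (m + 1) → Z) i)
      = ℓ θ' z + ∑ i, ℓ θ' (D' i) :=
    fun θ' => gibbsAux_sum_snoc (ℓ θ') z D'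
  simp only [gibbsDensity, h1, h2]

lemma gibbsAux_exp_meas (hℓ : Measurable fun p : Θ × Z => ℓ p.1 p.2) (k : ℕ) :
    Measurable fun p : (Fin k → Z) × Θ => Real.exp (-(∑ i, ℓ p.2 (p.1 i)) / T) := by
  have hsum : Measurable fun p : (Fin k → Z) × Θ => ∑ i, ℓ p.2 (p.1 i) :=
    Finset.measurable_sum _ fun i _ =>
      hℓ.comp (measurable_snd.prodMk ((measurable_pi_apply i).comp measurable_fst))
  exact (hsum.neg.div_const T).exp

lemma gibbsAux_meas [SigmaFinite μ] (hℓ : Measurable fun p : Θ × Z => ℓ p.1 p.2) (k : ℕ) :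
    Measurable fun p : (Fin k → Z) × Θ => gibbsDensity μ T ℓ p.1 p.2 := by
  have hexp := gibbsAux_exp_meas T ℓ hℓ k
  have hden : Measurable fun D : Fin k → Z =>
      ∫ θ', Real.exp (-(∑ i, ℓ θ' (D i)) / T) ∂μ :=
    (StronglyMeasurable.integral_prod_right' (hexp.stronglyMeasurable)).measurable
  exact hexp.div (hden.comp measurable_fst)

lemma gibbsAux_int_one {k : ℕ} {D : Fin k → Z}
    (hpos : 0 < ∫ θ, Real.exp (-(∑ i, ℓ θ (D i)) / T) ∂μ) :
    ∫ θ, gibbsDensity μ T ℓ D θ ∂μ = 1 := by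
  simp only [gibbsDensity]
  rw [integral_div, div_self hpos.ne']

lemma gibbsAux_integrable {k : ℕ} {D : Fin k → Z}
    (hint : Integrable (fun θ => Real.exp (-(∑ i, ℓ θ (D i)) / T)) μ) :
    Integrable (fun θ => gibbsDensity μ T ℓ D θ) μ :=
  hint.div_const _

lemma gibbsAux_mul_integrable {k : ℕ} {D : Fin k → Z} {h : Θ → ℝ} {C : ℝ}
    (hm : AEStronglyMeasurable (fun θ => h θ * gibbsDensity μ T ℓ D θ) μ)
    (hb : ∀ θ, |h θ| ≤ C)
    (hint : Integrable (fun θ => Real.exp (-(∑ i, ℓ θ (D i)) / T)) μ) :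
    Integrable (fun θ => h θ * gibbsDensity μ T ℓ D θ) μ := by
  refine ((gibbsAux_integrable μ T ℓ hint).const_mul C).mono' hm ?_
  refine Filter.Eventually.of_forall fun θ => ?_
  rw [Real.norm_eq_abs, abs_mul, abs_of_nonneg (gibbsAux_nonneg μ T ℓ D θ)]
  exact mul_le_mul_of_nonneg_right (hb θ) (gibbsAux_nonneg μ T ℓ D θ)

lemma gibbsAux_bound {k : ℕ} {D : Fin k → Z} {h : Θ → ℝ} {C : ℝ}
    (hb : ∀ θ, |h θ| ≤ C)
    (hint : Integrable (fun θ => Real.exp (-(∑ i, ℓ θ (D i)) / T)) μ)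
    (hpos : 0 < ∫ θ, Real.exp (-(∑ i, ℓ θ (D i)) / T) ∂μ) :
    |∫ θ, h θ * gibbsDensity μ T ℓ D θ ∂μ| ≤ C := by
  calc |∫ θ, h θ * gibbsDensity μ T ℓ D θ ∂μ|
      = ‖∫ θ, h θ * gibbsDensity μ T ℓ D θ ∂μ‖ := (Real.norm_eq_abs _).symm
    _ ≤ ∫ θ, ‖h θ * gibbsDensity μ T ℓ D θ‖ ∂μ := norm_integral_le_integral_norm _
    _ ≤ ∫ θ, C * gibbsDensity μ T ℓ D θ ∂μ := by
        refine integral_mono_of_nonneg (Filter.Eventually.of_forall fun θ => norm_nonneg _)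
          ((gibbsAux_integrable μ T ℓ hint).const_mul C)
          (Filter.Eventually.of_forall fun θ => ?_)
        show ‖h θ * gibbsDensity μ T ℓ D θ‖ ≤ C * gibbsDensity μ T ℓ D θ
        rw [Real.norm_eq_abs, abs_mul, abs_of_nonneg (gibbsAux_nonneg μ T ℓ D θ)]
        exact mul_le_mul_of_nonneg_right (hb θ) (gibbsAux_nonneg μ T ℓ D θ)
    _ = C * ∫ θ, gibbsDensity μ T ℓ D θ ∂μ := integral_const_mul _ _
    _ = C := by rw [gibbsAux_int_one μ T ℓ hpos, mul_one]

lemma gibbsAux_snoc_eq {m : ℕ} (z : Z) (D' : Fin m → Z) (θ : Θ) :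
    gibbsDensity μ T ℓ (Fin.snoc D' z) θ
      = Real.exp (-(ℓ θ z + ∑ i, ℓ θ (D' i)) / T) /
        ∫ θ', Real.exp (-(ℓ θ' z + ∑ i, ℓ θ' (D' i)) / T) ∂μ := by
  have h2 : ∀ θ' : Θ, ∑ i, ℓ θ' ((Fin.snoc D' z : Fin (m + 1) → Z) i)
      = ℓ θ' z + ∑ i, ℓ θ' (D' i) :=
    fun θ' => gibbsAux_sum_snoc (ℓ θ') z D'
  simp only [gibbsDensity, h2]

lemma gibbsAux_exp_meas_snoc (hℓ : Measurable fun p : Θ × Z => ℓ p.1 p.2) (m : ℕ) :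
    Measurable fun q : (Z × (Fin m → Z)) × Θ =>
      Real.exp (-(ℓ q.2 q.1.1 + ∑ i, ℓ q.2 (q.1.2 i)) / T) := by
  have h1 : Measurable fun q : (Z × (Fin m → Z)) × Θ => ℓ q.2 q.1.1 :=
    hℓ.comp (measurable_snd.prodMk measurable_fst.fst)
  have h2 : Measurable fun q : (Z × (Fin m → Z)) × Θ => ∑ i, ℓ q.2 (q.1.2 i) :=
    Finset.measurable_sum _ fun i _ =>
      hℓ.comp (measurable_snd.prodMk ((measurable_pi_apply i).comp measurable_fst.snd))
  exact ((h1.add h2).neg.div_const T).exp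

lemma gibbsAux_meas_snoc [SigmaFinite μ] (hℓ : Measurable fun p : Θ × Z => ℓ p.1 p.2) (m : ℕ) :
    Measurable fun q : (Z × (Fin m → Z)) × Θ =>
      gibbsDensity μ T ℓ (Fin.snoc q.1.2 q.1.1) q.2 := by
  have heq : (fun q : (Z × (Fin m → Z)) × Θ => gibbsDensity μ T ℓ (Fin.snoc q.1.2 q.1.1) q.2)
      = fun q => Real.exp (-(ℓ q.2 q.1.1 + ∑ i, ℓ q.2 (q.1.2 i)) / T) /
          ∫ θ', Real.exp (-(ℓ θ' q.1.1 + ∑ i, ℓ θ' (q.1.2 i)) / T) ∂μ := by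
    funext q
    exact gibbsAux_snoc_eq μ T ℓ q.1.1 q.1.2 q.2
  rw [heq]
  have hexp := gibbsAux_exp_meas_snoc T ℓ hℓ m
  have hden : Measurable fun p : Z × (Fin m → Z) =>
      ∫ θ', Real.exp (-(ℓ θ' p.1 + ∑ i, ℓ θ' (p.2 i)) / T) ∂μ :=
    (StronglyMeasurable.integral_prod_right' (hexp.stronglyMeasurable)).measurable
  exact hexp.div (hden.comp measurable_fst)

lemma gibbsAux_meas_snoc_fixed [SigmaFinite μ] (hℓ : Measurable fun p : Θ × Z => ℓ p.1 p.2)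
    (m : ℕ) (z : Z) :
    Measurable fun p : (Fin m → Z) × Θ =>
      gibbsDensity μ T ℓ (Fin.snoc p.1 z) p.2 := by
  have heq : (fun p : (Fin m → Z) × Θ => gibbsDensity μ T ℓ (Fin.snoc p.1 z) p.2)
      = fun p => Real.exp (-(ℓ p.2 z + ∑ i, ℓ p.2 (p.1 i)) / T) /
          ∫ θ', Real.exp (-(ℓ θ' z + ∑ i, ℓ θ' (p.1 i)) / T) ∂μ := by
    funext p
    exact gibbsAux_snoc_eq μ T ℓ z p.1 p.2
  rw [heq]
  have hexp : Measurable fun p : (Fin m → Z) × Θ =>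
      Real.exp (-(ℓ p.2 z + ∑ i, ℓ p.2 (p.1 i)) / T) := by
    have h1 : Measurable fun p : (Fin m → Z) × Θ => ℓ p.2 z :=
      hℓ.comp (measurable_snd.prodMk measurable_const)
    have h2 : Measurable fun p : (Fin m → Z) × Θ => ∑ i, ℓ p.2 (p.1 i) :=
      Finset.measurable_sum _ fun i _ =>
        hℓ.comp (measurable_snd.prodMk ((measurable_pi_apply i).comp measurable_fst))
    exact ((h1.add h2).neg.div_const T).exp
  have hden : Measurable fun D' : Fin m → Z =>
      ∫ θ', Real.exp (-(ℓ θ' z + ∑ i, ℓ θ' (D' i)) / T) ∂μ :=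
    (StronglyMeasurable.integral_prod_right' (hexp.stronglyMeasurable)).measurable
  exact hexp.div (hden.comp measurable_fst)

end GibbsAux

/-- Exchangeability computation for the "member" hypothesis `H₁` of the
membership-inference LRT (Lemma 1): the joint law of `(θ, z_J)` — where the
dataset `D` of size `n = m+1` is sampled i.i.d. from `π`, the model `θ` is
sampled from the Gibbs posterior `p_D`, and `J` is a uniformly random index —
has density `(θ, z) ↦ 𝔼_{D'∼π^m}[p_{D'∪z}(θ)]` with respect to `μ ⊗ π`; i.e.
for every bounded measurable `g`,
`𝔼_{H₁}[g(θ, z_J)] = ∫_Z ∫_Θ g(θ,z) · 𝔼_{D'∼π^m}[p_{D'∪z}(θ)] dμ(θ) dπ(z)`. -/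
theorem h1_joint_law_density
    {Θ Z : Type*} [MeasurableSpace Θ] [MeasurableSpace Z]
    (μ : Measure Θ) [SigmaFinite μ]
    (π : Measure Z) [IsProbabilityMeasure π]
    (T : ℝ) (hT : 0 < T)
    (ℓ : Θ → Z → ℝ) (hℓ : Measurable fun p : Θ × Z => ℓ p.1 p.2)
    (hℓ0 : ∀ θ z, 0 ≤ ℓ θ z)
    (m : ℕ)
    (hwell : ∀ k : ℕ, ∀ᵐ D ∂(Measure.pi fun _ : Fin k => π),
      Integrable (fun θ => Real.exp (-(∑ i, ℓ θ (D i)) / T)) μ ∧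
      0 < ∫ θ, Real.exp (-(∑ i, ℓ θ (D i)) / T) ∂μ)
    (g : Θ → Z → ℝ) (hg : Measurable fun p : Θ × Z => g p.1 p.2)
    (hgb : ∃ C : ℝ, ∀ θ z, |g θ z| ≤ C) :
    ∫ D, (∑ j : Fin (m + 1), ∫ θ, g θ (D j) * gibbsDensity μ T ℓ D θ ∂μ)
          / (m + 1 : ℝ)
        ∂(Measure.pi fun _ : Fin (m + 1) => π)
      = ∫ z, ∫ θ, g θ z *
            (∫ D', gibbsDensity μ T ℓ (Fin.snoc D' z) θ
              ∂(Measure.pi fun _ : Fin m => π)) ∂μ ∂π := by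
  classical
  obtain ⟨C₀, hC₀⟩ := hgb
  set C : ℝ := max C₀ 0 with hCdef
  have hC : ∀ θ z, |g θ z| ≤ C := fun θ z => (hC₀ θ z).trans (le_max_left _ _)
  have hC0 : (0 : ℝ) ≤ C := le_max_right _ _
  set ν : (k : ℕ) → Measure (Fin k → Z) :=
    fun k => Measure.pi fun _ : Fin k => π with hνdef
  have hpm : ∀ k : ℕ, Measurable fun p : (Fin k → Z) × Θ => gibbsDensity μ T ℓ p.1 p.2 :=
    gibbsAux_meas μ T ℓ hℓ
  -- snoc is measurable
  have hsnocm : Measurable fun p : Z × (Fin m → Z) => (Fin.snoc p.2 p.1 : Fin (m + 1) → Z) := by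
    refine measurable_pi_iff.2 fun i => ?_
    induction i using Fin.lastCases with
    | last => simpa using measurable_fst
    | cast k =>
      have hk : Measurable fun p : Z × (Fin m → Z) => p.2 k :=
        (measurable_pi_apply k).comp measurable_snd
      simpa using hk
  -- the integrand after pulling one coordinate out
  set Ψ : Z × (Fin m → Z) → ℝ :=
    fun p => ∫ θ, g θ p.1 * gibbsDensity μ T ℓ (Fin.snoc p.2 p.1) θ ∂μ with hΨdef
  have hΨint_meas : Measurable fun q : (Z × (Fin m → Z)) × Θ =>
      g q.2 q.1.1 * gibbsDensity μ T ℓ (Fin.snoc q.1.2 q.1.1) q.2 :=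
    (hg.comp (measurable_snd.prodMk measurable_fst.fst)).mul
      (gibbsAux_meas_snoc μ T ℓ hℓ m)
  have hΨmeas : Measurable Ψ :=
    (StronglyMeasurable.integral_prod_right' hΨint_meas.stronglyMeasurable).measurable
  -- transport the well-definedness hypothesis to `π.prod (ν m)` via `snoc`
  have hgood : ∀ᵐ p ∂(π.prod (ν m)),
      Integrable (fun θ => Real.exp (-(∑ i, ℓ θ ((Fin.snoc p.2 p.1 : Fin (m + 1) → Z) i)) / T)) μ ∧
      0 < ∫ θ, Real.exp (-(∑ i, ℓ θ ((Fin.snoc p.2 p.1 : Fin (m + 1) → Z) i)) / T) ∂μ := by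
    have hMP := (measurePreserving_piFinSuccAbove (fun _ : Fin (m + 1) => π) (Fin.last m))
    have hMP' := MeasurePreserving.symm _ hMP
    have h := hMP'.quasiMeasurePreserving.ae (hwell (m + 1))
    refine h.mono fun p hp => ?_
    have hfun : (fun θ => Real.exp
          (-(∑ i, ℓ θ ((MeasurableEquiv.piFinSuccAbove (fun _ : Fin (m + 1) => Z)
            (Fin.last m)).symm p i)) / T))
        = fun θ => Real.exp (-(∑ i, ℓ θ ((Fin.snoc p.2 p.1 : Fin (m + 1) → Z) i)) / T) := by
      funext θ
      simp only [MeasurableEquiv.piFinSuccAbove_symm_apply, Fin.insertNthEquiv,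
        Equiv.coe_fn_mk]
      rw [gibbsAux_sum_insertNth (ℓ θ) (Fin.last m) p.1 p.2,
        gibbsAux_sum_snoc (ℓ θ) p.1 p.2]
    rw [hfun] at hp
    exact hp
  have hgoodz := Measure.ae_ae_of_ae_prod hgood
  -- boundedness and integrability of Ψ
  have hΨbound : ∀ᵐ p ∂(π.prod (ν m)), ‖Ψ p‖ ≤ C := by
    refine hgood.mono fun p hp => ?_
    rw [Real.norm_eq_abs]
    exact gibbsAux_bound μ T ℓ (fun θ => hC θ p.1) hp.1 hp.2
  have hΨInt : Integrable Ψ (π.prod (ν m)) :=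
    (integrable_const C).mono' hΨmeas.aestronglyMeasurable hΨbound
  -- each summand of the LHS equals `∫ Ψ`
  have hstep : ∀ j : Fin (m + 1),
      (∫ D, (∫ θ, g θ (D j) * gibbsDensity μ T ℓ D θ ∂μ) ∂(ν (m + 1)))
        = ∫ p, Ψ p ∂(π.prod (ν m)) := by
    intro j
    have hMP := measurePreserving_piFinSuccAbove (fun _ : Fin (m + 1) => π) j
    have h1 := (MeasurePreserving.symm _ hMP).integral_comp'
      (fun D => ∫ θ, g θ (D j) * gibbsDensity μ T ℓ D θ ∂μ)
    rw [← h1]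
    refine integral_congr_ae (Filter.Eventually.of_forall fun p => ?_)
    simp only [MeasurableEquiv.piFinSuccAbove_symm_apply, Fin.insertNthEquiv,
      Equiv.coe_fn_mk, hΨdef]
    refine integral_congr_ae (Filter.Eventually.of_forall fun θ => ?_)
    simp only [Fin.insertNth_apply_same, gibbsAux_insertNth μ T ℓ]
  -- integrability of each summand of the LHS
  have hΦmeas : ∀ j : Fin (m + 1),
      Measurable fun D : Fin (m + 1) → Z =>
        ∫ θ, g θ (D j) * gibbsDensity μ T ℓ D θ ∂μ := by
    intro j
    have hs : Measurable fun q : (Fin (m + 1) → Z) × Θ =>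
        g q.2 (q.1 j) * gibbsDensity μ T ℓ q.1 q.2 :=
      (hg.comp (measurable_snd.prodMk
        ((measurable_pi_apply j).comp measurable_fst))).mul (hpm (m + 1))
    exact (StronglyMeasurable.integral_prod_right' hs.stronglyMeasurable).measurable
  have hΦint : ∀ j : Fin (m + 1),
      Integrable (fun D : Fin (m + 1) → Z =>
        ∫ θ, g θ (D j) * gibbsDensity μ T ℓ D θ ∂μ) (ν (m + 1)) := by
    intro j
    refine (integrable_const C).mono' (hΦmeas j).aestronglyMeasurable ?_
    refine (hwell (m + 1)).mono fun D hD => ?_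
    rw [Real.norm_eq_abs]
    exact gibbsAux_bound μ T ℓ (fun θ => hC θ (D j)) hD.1 hD.2
  -- assemble the LHS
  have hLHS : ∫ D, (∑ j : Fin (m + 1), ∫ θ, g θ (D j) * gibbsDensity μ T ℓ D θ ∂μ)
          / (m + 1 : ℝ) ∂(ν (m + 1))
      = ∫ p, Ψ p ∂(π.prod (ν m)) := by
    rw [integral_div, integral_finset_sum _ fun j _ => hΦint j]
    have : ∀ j ∈ Finset.univ, (∫ D, (∫ θ, g θ (D j) * gibbsDensity μ T ℓ D θ ∂μ) ∂(ν (m + 1)))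
        = ∫ p, Ψ p ∂(π.prod (ν m)) := fun j _ => hstep j
    rw [Finset.sum_congr rfl this, Finset.sum_const, Finset.card_univ, Fintype.card_fin,
      nsmul_eq_mul]
    have hne : ((m : ℝ) + 1) ≠ 0 := by positivity
    push_cast
    field_simp
  rw [hLHS, integral_prod _ hΨInt]
  -- now handle the inner integral for a.e. z
  refine integral_congr_ae ?_
  refine hgoodz.mono fun z hz => ?_
  -- Fubini on `(ν m).prod μ` for this fixed z
  have hq_meas : Measurable fun p : (Fin m → Z) × Θ =>
      gibbsDensity μ T ℓ (Fin.snoc p.1 z) p.2 :=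
    gibbsAux_meas_snoc_fixed μ T ℓ hℓ m z
  have hq_int : Integrable (fun p : (Fin m → Z) × Θ =>
      gibbsDensity μ T ℓ (Fin.snoc p.1 z) p.2) ((ν m).prod μ) := by
    rw [integrable_prod_iff hq_meas.aestronglyMeasurable]
    constructor
    · refine hz.mono fun D' hD' => ?_
      show Integrable (fun θ => gibbsDensity μ T ℓ (Fin.snoc D' z) θ) μ
      exact gibbsAux_integrable μ T ℓ hD'.1
    · refine (integrable_const (1 : ℝ)).congr ?_
      refine hz.mono fun D' hD' => ?_
      show (1 : ℝ) = ∫ θ, ‖gibbsDensity μ T ℓ (Fin.snoc D' z) θ‖ ∂μ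
      have heq : (fun θ => ‖gibbsDensity μ T ℓ (Fin.snoc D' z) θ‖)
          = fun θ => gibbsDensity μ T ℓ (Fin.snoc D' z) θ := by
        funext θ
        rw [Real.norm_eq_abs, abs_of_nonneg (gibbsAux_nonneg μ T ℓ _ θ)]
      rw [heq, gibbsAux_int_one μ T ℓ hD'.2]
  have hf_int : Integrable (Function.uncurry fun (D' : Fin m → Z) (θ : Θ) =>
      g θ z * gibbsDensity μ T ℓ (Fin.snoc D' z) θ) ((ν m).prod μ) := by
    refine (hq_int.const_mul C).mono' ?_ ?_
    · exact ((hg.comp (measurable_snd.prodMk measurable_const)).mul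
        hq_meas).aestronglyMeasurable
    · refine Filter.Eventually.of_forall fun p => ?_
      show ‖g p.2 z * gibbsDensity μ T ℓ (Fin.snoc p.1 z) p.2‖
          ≤ C * gibbsDensity μ T ℓ (Fin.snoc p.1 z) p.2
      rw [Real.norm_eq_abs, abs_mul, abs_of_nonneg (gibbsAux_nonneg μ T ℓ _ _)]
      exact mul_le_mul_of_nonneg_right (hC _ z) (gibbsAux_nonneg μ T ℓ _ _)
  have hswap := integral_integral_swap hf_int
  calc ∫ D', Ψ (z, D') ∂(ν m)
      = ∫ D', ∫ θ, g θ z * gibbsDensity μ T ℓ (Fin.snoc D' z) θ ∂μ ∂(ν m) := rfl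
    _ = ∫ θ, ∫ D', g θ z * gibbsDensity μ T ℓ (Fin.snoc D' z) θ ∂(ν m) ∂μ := hswap
    _ = ∫ θ, g θ z * ∫ D', gibbsDensity μ T ℓ (Fin.snoc D' z) θ ∂(ν m) ∂μ := by
        refine integral_congr_ae (Filter.Eventually.of_forall fun θ => ?_)
        exact integral_const_mul _ _
end

section
/- Let π be a probability measure on a measurable data space Z, let n ≥ 1, T > 0, and let ℓ : Θ × Z → ℝ be nonnegative and measurable, with Gibbs posterior densities p_D(θ) := exp(−(1/T)Σ_{z∈D} ℓ(θ,z))/∫ exp(−(1/T)Σ_{z∈D} ℓ(θ',z)) dμ(θ') well defined (finite positive normalizer) for π-almost every tuple D of the relevant lengths. Define the H₀ density L₀(θ,z) := 𝔼_{D∼π^n}[p_D(θ)] and the H₁ density L₁(θ,z) := 𝔼_{D'∼π^{n−1}}[p_{D'∪z}(θ)] (both with respect to μ ⊗ π). Then for every θ ∈ Θ and z ∈ Z with 𝔼_{D'∼π^{n−1}}[p_{D'}(θ)] > 0, the likelihood ratio satisfies L₀(θ,z)/L₁(θ,z) ≤ exp(ℓ(θ,z)/T) · 𝔼_{D∼π^n}[p_D(θ)]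 / 𝔼_{D'∼π^{n−1}}[p_{D'}(θ)]. -/
open MeasureTheory

lemma gibbsDensity_nonneg {Θ Z : Type*} [MeasurableSpace Θ]
    (μ : MeasureTheory.Measure Θ) (T : ℝ) (ℓ : Θ → Z → ℝ)
    {m : ℕ} (D : Fin m → Z) (θ : Θ) : 0 ≤ gibbsDensity μ T ℓ D θ :=
  div_nonneg (Real.exp_nonneg _) (integral_nonneg fun _ => Real.exp_nonneg _)

/-- pointwise key inequality -/
lemma gibbs_snoc_ge {Θ Z : Type*} [MeasurableSpace Θ] [MeasurableSpace Z]
    (μ : Measure Θ) (T : ℝ) (hT : 0 < T)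
    (ℓ : Θ → Z → ℝ) (hℓ : Measurable fun p : Θ × Z => ℓ p.1 p.2)
    (hℓ0 : ∀ θ z, 0 ≤ ℓ θ z) {m : ℕ} (D' : Fin m → Z) (θ : Θ) (z : Z)
    (hμ : μ ≠ 0)
    (hI : Integrable (fun θ' => Real.exp (-(∑ i, ℓ θ' (D' i)) / T)) μ) :
    Real.exp (-(ℓ θ z / T)) * gibbsDensity μ T ℓ D' θ
      ≤ gibbsDensity μ T ℓ (Fin.snoc D' z) θ := by
  have hsum : ∀ θ' : Θ, (∑ i : Fin (m + 1), ℓ θ' ((Fin.snoc D' z : Fin (m+1) → Z) i))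
      = (∑ i : Fin m, ℓ θ' (D' i)) + ℓ θ' z := by
    intro θ'
    simp [Fin.sum_univ_castSucc]
  -- measurability of the snoc integrand
  have hmeas : Measurable fun θ' =>
      Real.exp (-((∑ i : Fin m, ℓ θ' (D' i)) + ℓ θ' z) / T) := by
    apply Measurable.exp
    apply Measurable.div_const
    apply Measurable.neg
    apply Measurable.add
    · exact Finset.measurable_sum _ fun i _ =>
        hℓ.comp (measurable_id.prodMk measurable_const)
    · exact hℓ.comp (measurable_id.prodMk measurable_const)
  set I := ∫ θ', Real.exp (-(∑ i, ℓ θ' (D' i)) / T) ∂μ with hIdef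
  have hptle : ∀ θ' : Θ, Real.exp (-((∑ i : Fin m, ℓ θ' (D' i)) + ℓ θ' z) / T)
      ≤ Real.exp (-(∑ i, ℓ θ' (D' i)) / T) := by
    intro θ'
    apply Real.exp_le_exp.2
    have h := hℓ0 θ' z
    gcongr
    linarith
  have hJint : Integrable
      (fun θ' => Real.exp (-((∑ i : Fin m, ℓ θ' (D' i)) + ℓ θ' z) / T)) μ := by
    apply hI.mono hmeas.aestronglyMeasurable
    filter_upwards with θ'
    rw [Real.norm_eq_abs, Real.norm_eq_abs, abs_of_nonneg (Real.exp_nonneg _),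
      abs_of_nonneg (Real.exp_nonneg _)]
    exact hptle θ'
  have hJpos : 0 < ∫ θ', Real.exp (-((∑ i : Fin m, ℓ θ' (D' i)) + ℓ θ' z) / T) ∂μ := by
    rw [integral_pos_iff_support_of_nonneg (fun θ' => Real.exp_nonneg _) hJint]
    have : (Function.support fun θ' =>
        Real.exp (-((∑ i : Fin m, ℓ θ' (D' i)) + ℓ θ' z) / T)) = Set.univ := by
      ext θ'; simp [(Real.exp_pos _).ne']
    rw [this]
    exact Measure.measure_univ_pos.2 hμ
  have hJle : (∫ θ', Real.exp (-((∑ i : Fin m, ℓ θ' (D' i)) + ℓ θ' z) / T) ∂μ) ≤ I := by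
    refine integral_mono_of_nonneg ?_ hI ?_
    · filter_upwards with θ' using Real.exp_nonneg _
    · filter_upwards with θ' using hptle θ'
  -- rewrite the snoc gibbs density
  have hrw : gibbsDensity μ T ℓ (Fin.snoc D' z) θ
      = (Real.exp (-(ℓ θ z / T)) * Real.exp (-(∑ i, ℓ θ (D' i)) / T)) /
        ∫ θ', Real.exp (-((∑ i : Fin m, ℓ θ' (D' i)) + ℓ θ' z) / T) ∂μ := by
    unfold gibbsDensity
    have : ∀ θ' : Θ, (-(∑ i : Fin (m+1), ℓ θ' ((Fin.snoc D' z : Fin (m+1) → Z) i)) / T)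
        = -((∑ i : Fin m, ℓ θ' (D' i)) + ℓ θ' z) / T := by
      intro θ'; rw [hsum]
    simp only [this]
    rw [← Real.exp_add]
    congr 1
    · congr 1; field_simp; ring
  rw [hrw]
  unfold gibbsDensity
  rw [← hIdef, ← mul_div_assoc]
  gcongr

/-- The rigorous likelihood-ratio bound in the proof of the approximated LRT
(Lemma 1): with `n = m + 1`, `L₀(θ,z) = 𝔼_{D∼π^n}[p_D(θ)]` the H₀ density and
`L₁(θ,z) = 𝔼_{D'∼π^{n−1}}[p_{D'∪z}(θ)]` the H₁ density (both w.r.t. `μ ⊗ π`),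
for every `θ` and `z` with `𝔼_{D'∼π^{n−1}}[p_{D'}(θ)] > 0` we have
`L₀(θ,z)/L₁(θ,z) ≤ exp(ℓ(θ,z)/T) · 𝔼_{D∼π^n}[p_D(θ)] / 𝔼_{D'∼π^{n−1}}[p_{D'}(θ)]`. -/
theorem likelihood_ratio_le
    {Θ Z : Type*} [MeasurableSpace Θ] [MeasurableSpace Z]
    (μ : Measure Θ) [SigmaFinite μ]
    (π : Measure Z) [IsProbabilityMeasure π]
    (T : ℝ) (hT : 0 < T)
    (ℓ : Θ → Z → ℝ) (hℓ : Measurable fun p : Θ × Z => ℓ p.1 p.2)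
    (hℓ0 : ∀ θ z, 0 ≤ ℓ θ z)
    (m : ℕ)
    (hwell : ∀ k : ℕ, ∀ᵐ D ∂(Measure.pi fun _ : Fin k => π),
      Integrable (fun θ => Real.exp (-(∑ i, ℓ θ (D i)) / T)) μ ∧
      0 < ∫ θ, Real.exp (-(∑ i, ℓ θ (D i)) / T) ∂μ) :
    ∀ (θ : Θ) (z : Z),
      0 < ∫ D', gibbsDensity μ T ℓ D' θ ∂(Measure.pi fun _ : Fin m => π) →
      (∫ D, gibbsDensity μ T ℓ D θ ∂(Measure.pi fun _ : Fin (m + 1) => π)) /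
          (∫ D', gibbsDensity μ T ℓ (Fin.snoc D' z) θ
            ∂(Measure.pi fun _ : Fin m => π))
        ≤ Real.exp (ℓ θ z / T) *
            (∫ D, gibbsDensity μ T ℓ D θ ∂(Measure.pi fun _ : Fin (m + 1) => π)) /
            (∫ D', gibbsDensity μ T ℓ D' θ ∂(Measure.pi fun _ : Fin m => π)) := by
  intro θ z hC
  set πm := Measure.pi fun _ : Fin m => π with hπm
  set A := ∫ D, gibbsDensity μ T ℓ D θ ∂(Measure.pi fun _ : Fin (m + 1) => π) with hA
  set C := ∫ D', gibbsDensity μ T ℓ D' θ ∂πm with hCdef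
  set B := ∫ D', gibbsDensity μ T ℓ (Fin.snoc D' z) θ ∂πm with hB
  have hA0 : 0 ≤ A := integral_nonneg fun D => gibbsDensity_nonneg μ T ℓ D θ
  -- μ is nonzero
  have hμ : μ ≠ 0 := by
    have h := (hwell m).exists
    obtain ⟨D₀, _, hpos⟩ := h
    intro h0
    rw [h0] at hpos
    simp at hpos
  by_cases hInt : Integrable (fun D' => gibbsDensity μ T ℓ (Fin.snoc D' z) θ) πm
  · -- key integral inequality
    have key : Real.exp (-(ℓ θ z / T)) * C ≤ B := by
      rw [hCdef, ← integral_const_mul]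
      refine integral_mono_of_nonneg ?_ hInt ?_
      · filter_upwards with D' using
          mul_nonneg (Real.exp_nonneg _) (gibbsDensity_nonneg μ T ℓ D' θ)
      · filter_upwards [hwell m] with D' hD'
        exact gibbs_snoc_ge μ T hT ℓ hℓ hℓ0 D' θ z hμ hD'.1
    have hB0 : 0 < B := lt_of_lt_of_le (by positivity) key
    calc A / B ≤ A / (Real.exp (-(ℓ θ z / T)) * C) := by gcongr
      _ = Real.exp (ℓ θ z / T) * A / C := by
          rw [Real.exp_neg]
          field_simp
  · rw [hB, integral_undef hInt, div_zero]
    exact div_nonneg (mul_nonneg (Real.exp_nonneg _) hA0) hC.le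
end
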